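/- For a ∈ M, the subcategory C_a of representations of the linearly oriented quiver A_n is a torsion class (closed under quotients and extensions) if and only if a is a bracket vector. -/

import Mathlib

open Classical

/-- A representation of a quiver (given by vertex type `ι`, arrow type `E`,
and source/target maps `s t : E → ι`) over a field `K`: a finite-dimensional
`K`-vector space at each vertex and a linear map along each arrow. -/
structure QRep (K : Type) [Field K] {ι : Type} {E : Type} (s t : E → ι) : Type 1 where
  V : ι → Type
  [addV : ∀ i, AddCommGroup (V i)]
  [modV : ∀ i, Module K (V i)]
  [fdV : ∀ i, FiniteDimensional K (V i)]
  f : ∀ e : E, V (s e) →ₗ[K] V (t e)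

attribute [instance] QRep.addV QRep.modV QRep.fdV

namespace QRep

variable {K : Type} [Field K] {ι E : Type} {s t : E → ι}

/-- A morphism of representations: linear maps at each vertex commuting with the arrow maps. -/
structure Hom (X Y : QRep K s t) : Type where
  φ : ∀ i, X.V i →ₗ[K] Y.V i
  comm : ∀ e, (Y.f e).comp (φ (s e)) = (φ (t e)).comp (X.f e)

def Hom.Surjective {X Y : QRep K s t} (f : Hom X Y) : Prop := ∀ i, Function.Surjective (f.φ i)

def Hom.Injective {X Y : QRep K s t} (f : Hom X Y) : Prop := ∀ i, Function.Injective (f.φ i)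

/-- Two representations are isomorphic if there is a morphism bijective at every vertex. -/
def Iso (X Y : QRep K s t) : Prop := ∃ f : Hom X Y, ∀ i, Function.Bijective (f.φ i)

/-- Direct sum of two representations, taken vertexwise. -/
def dsum (X Y : QRep K s t) : QRep K s t where
  V i := X.V i × Y.V i
  f e := (X.f e).prodMap (Y.f e)

instance : Module.Finite K PUnit :=
  Module.Finite.of_surjective (0 : K →ₗ[K] PUnit) (fun x => ⟨0, Subsingleton.elim _ _⟩)

/-- The zero representation. -/
def zero : QRep K s t where
  V _ := PUnit
  f _ := 0

/-- A representation is zero if all its vector spaces are zero. -/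
def IsZero (X : QRep K s t) : Prop := ∀ i, ∀ x : X.V i, x = 0

/-- Indecomposable: nonzero, and not isomorphic to a direct sum of two nonzero representations. -/
def Indec (X : QRep K s t) : Prop :=
  ¬ X.IsZero ∧ ∀ A B : QRep K s t, Iso X (A.dsum B) → A.IsZero ∨ B.IsZero

/-- Direct sum of a finite list of representations. -/
noncomputable def dsumList : List (QRep K s t) → QRep K s t
  | [] => zero
  | X :: L => X.dsum (dsumList L)

/-- An extension `Y` of `Z` by `X`: an injective morphism `X → Y` and a surjective
morphism `Y → Z` whose vertexwise kernel is the image of `X`. -/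
structure Extension (X Y Z : QRep K s t) : Type where
  incl : Hom X Y
  proj : Hom Y Z
  inj : ∀ i, Function.Injective (incl.φ i)
  surj : ∀ i, Function.Surjective (proj.φ i)
  exact : ∀ i, LinearMap.ker (proj.φ i) = LinearMap.range (incl.φ i)

/-- An extension is trivial (split) if there is a morphism `Y → X` restricting to the identity on `X`. -/
def Extension.Trivial {X Y Z : QRep K s t} (E : Extension X Y Z) : Prop :=
  ∃ r : Hom Y X, ∀ i x, r.φ i (E.incl.φ i x) = x

/-- A subrepresentation of `Y`: a subspace at each vertex, stable under the arrow maps. -/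
structure Sub (Y : QRep K s t) : Type where
  p : ∀ i, Submodule K (Y.V i)
  stable : ∀ e, ∀ x ∈ p (s e), Y.f e x ∈ p (t e)

def Sub.toRep {Y : QRep K s t} (S : Sub Y) : QRep K s t where
  V i := S.p i
  f e := (Y.f e).restrict (S.stable e)

/-- The quotient representation `Y/X`. -/
def Sub.quot {Y : QRep K s t} (S : Sub Y) : QRep K s t where
  V i := Y.V i ⧸ S.p i
  f e := Submodule.mapQ (S.p (s e)) (S.p (t e)) (Y.f e) (fun x hx => S.stable e x hx)

/-- The inclusion morphism of a subrepresentation. -/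
def Sub.incl {Y : QRep K s t} (S : Sub Y) : Hom S.toRep Y where
  φ i := (S.p i).subtype
  comm e := by ext x; rfl

/-- The quotient morphism onto the quotient representation. -/
def Sub.mkQ {Y : QRep K s t} (S : Sub Y) : Hom Y S.quot where
  φ i := (S.p i).mkQ
  comm e := by ext x; first | rfl | exact Submodule.mapQ_apply _ _ _ x

/-- The space of morphisms between two representations, as a subspace of the product of Hom spaces. -/
def HomSpace (X Y : QRep K s t) : Submodule K (∀ i, X.V i →ₗ[K] Y.V i) where
  carrier := {φ | ∀ e, (Y.f e).comp (φ (s e)) = (φ (t e)).comp (X.f e)}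
  add_mem' := by
    intro a b ha hb e
    simp only [Set.mem_setOf_eq] at ha hb
    simp [LinearMap.comp_add, LinearMap.add_comp, ha e, hb e]
  zero_mem' := by intro e; simp
  smul_mem' := by
    intro c a ha e
    simp only [Set.mem_setOf_eq] at ha
    simp [LinearMap.comp_smul, LinearMap.smul_comp, ha e]

end QRep
/-- The source of the `e`-th arrow of the linearly oriented quiver `Aₙ`
(vertices `0,…,n-1`, arrows `e → e+1` for `0 ≤ e < n-1`; 0-based indexing). -/
def ASrc (n : ℕ) (e : Fin (n - 1)) : Fin n := ⟨e.val, by have := e.isLt; omega⟩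

/-- The target of the `e`-th arrow of `Aₙ`. -/
def ATgt (n : ℕ) (e : Fin (n - 1)) : Fin n := ⟨e.val + 1, by have := e.isLt; omega⟩

/-- Representations of the linearly oriented quiver `Aₙ`. -/
abbrev ARep (K : Type) [Field K] (n : ℕ) := QRep K (ASrc n) (ATgt n)

/-- The canonical map from `M` to a submodule `T`: the identity if `T = ⊤`, zero otherwise. -/
noncomputable def toSub {K M : Type} [Field K] [AddCommGroup M] [Module K M]
    (T : Submodule K M) : M →ₗ[K] T :=
  if h : T = ⊤ then LinearMap.codRestrict T LinearMap.id (fun x => by simp [h]) else 0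

/-- The vertex spaces of the interval representation `E^{ij}`: `K` for `i ≤ p ≤ j`, zero otherwise. -/
def ESub (K : Type) [Field K] (n i j : ℕ) (p : Fin n) : Submodule K K :=
  if i ≤ p.val ∧ p.val ≤ j then ⊤ else ⊥

/-- The interval representation `E^{ij}` of `Aₙ` (0-based): one-dimensional spaces at
vertices `i,…,j`, identity maps between consecutive ones, zero elsewhere. -/
noncomputable def Eij (K : Type) [Field K] (n i j : ℕ) : ARep K n where
  V p := ESub K n i j p
  f e := (toSub (ESub K n i j (ATgt n e))).comp (ESub K n i j (ASrc n e)).subtype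

/-- Direct sum of interval representations indexed by a list of pairs. -/
noncomputable def intervalSum (K : Type) [Field K] (n : ℕ) (L : List (ℕ × ℕ)) : ARep K n :=
  QRep.dsumList (L.map fun pr => Eij K n pr.1 pr.2)

/-- Membership of the pair `(i,j)` in `F_a = {(i,j) : i ≤ j < i + a_i}` (0-based;
`pr.2 < n` ensures the interval lies in the vertex range). -/
def condF (n : ℕ) (a : ℕ → ℕ) (pr : ℕ × ℕ) : Prop :=
  pr.1 ≤ pr.2 ∧ pr.2 < n ∧ pr.2 < pr.1 + a pr.1

/-- An object lies in the full additive subcategory determined by the interval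
representations `E^{ij}` with `cond (i,j)`, i.e. it is isomorphic to a finite direct sum
of such intervals. -/
def InCat (K : Type) [Field K] (n : ℕ) (cond : ℕ × ℕ → Prop) (X : ARep K n) : Prop :=
  ∃ L : List (ℕ × ℕ), (∀ pr ∈ L, cond pr) ∧ QRep.Iso X (intervalSum K n L)

/-- The subcategory of intervals satisfying `cond` is closed under quotients. -/
def QuotClosedCat (K : Type) [Field K] (n : ℕ) (cond : ℕ × ℕ → Prop) : Prop :=
  ∀ X Y : ARep K n, InCat K n cond X → (∃ f : QRep.Hom X Y, f.Surjective) → InCat K n cond Y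

/-- The subcategory of intervals satisfying `cond` is closed under extensions. -/
def ExtClosedCat (K : Type) [Field K] (n : ℕ) (cond : ℕ × ℕ → Prop) : Prop :=
  ∀ X Y Z : ARep K n, InCat K n cond X → InCat K n cond Z →
    Nonempty (QRep.Extension X Y Z) → InCat K n cond Y

/-- `a` is a bracket vector (membership in `M` stated separately): whenever
`1 ≤ j ≤ a i` (and `i + j` is a vertex), `j + a_{i+j} ≤ a_i`. 0-based indices. -/
def IsBracketVecN (n : ℕ) (a : ℕ → ℕ) : Prop :=
  ∀ i < n, ∀ j : ℕ, 1 ≤ j → j ≤ a i → i + j < n → j + a (i + j) ≤ a i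


section Tors

variable {K : Type} [Field K] {n : ℕ}

namespace QRep

/-- transport along equality of vertices -/
def vEquiv (W : ARep K n) {p q : Fin n} (h : p = q) : W.V p ≃ₗ[K] W.V q :=
  h ▸ LinearEquiv.refl K _

/-- the single-arrow map, in ℕ-indexed form -/
def stepMap (W : ARep K n) (m : ℕ) (hm : m + 1 < n) :
    W.V ⟨m, by omega⟩ →ₗ[K] W.V ⟨m + 1, hm⟩ :=
  W.f ⟨m, by omega⟩

/-- composite map along the path from vertex `k` to vertex `l`. -/
def pmap (W : ARep K n) (k : ℕ) (hk : k < n) :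
    (l : ℕ) → (hl : l < n) → (hkl : k ≤ l) → (W.V ⟨k, hk⟩ →ₗ[K] W.V ⟨l, hl⟩)
  | 0, hl, hkl => (vEquiv W (by simp only [Fin.mk.injEq]; omega : (⟨k, hk⟩ : Fin n) = ⟨0, hl⟩)).toLinearMap
  | (m+1), hl, hkl =>
    if h : k = m + 1 then
      (vEquiv W (by simp only [Fin.mk.injEq]; omega : (⟨k, hk⟩ : Fin n) = ⟨m+1, hl⟩)).toLinearMap
    else (stepMap W m hl) ∘ₗ pmap W k hk m (by omega) (by omega)

theorem pmap_self (W : ARep K n) (k : ℕ) (hk hk' : k < n) (h : k ≤ k) (x : W.V ⟨k, hk⟩) :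
    pmap W k hk k hk' h x = x := by
  cases k with
  | zero => rfl
  | succ m => simp only [pmap, dif_pos rfl]; rfl

theorem pmap_succ (W : ARep K n) (k : ℕ) (hk : k < n) (m : ℕ) (hm : m + 1 < n)
    (hkm : k ≤ m) (h : k ≤ m + 1) (x : W.V ⟨k, hk⟩) :
    pmap W k hk (m+1) hm h x = stepMap W m hm (pmap W k hk m (by omega) hkm x) := by
  simp only [pmap, dif_neg (by omega : ¬ k = m + 1)]; rfl

theorem pmap_comp (W : ARep K n) (k q : ℕ) (hk : k < n) (hq : q < n) (hkq : k ≤ q) :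
    ∀ (l : ℕ) (hql : q ≤ l) (hl : l < n) (x : W.V ⟨k, hk⟩),
      pmap W q hq l hl hql (pmap W k hk q hq hkq x) = pmap W k hk l hl (le_trans hkq hql) x := by
  intro l hql
  induction l, hql using Nat.le_induction with
  | base => intro hl x; rw [pmap_self]
  | succ l hql ih =>
    intro hl x
    rw [pmap_succ W q hq l hl hql, pmap_succ W k hk l hl (by omega), ih]

/-- naturality of pmap with respect to morphisms -/
theorem pmap_natural {X Y : ARep K n} (f : Hom X Y) (k : ℕ) (hk : k < n) :
    ∀ (l : ℕ) (hkl : k ≤ l) (hl : l < n) (x : X.V ⟨k, hk⟩),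
      f.φ ⟨l, hl⟩ (pmap X k hk l hl hkl x) = pmap Y k hk l hl hkl (f.φ ⟨k, hk⟩ x) := by
  intro l hkl
  induction l, hkl using Nat.le_induction with
  | base => intro hl x; rw [pmap_self, pmap_self]
  | succ l hkl ih =>
    intro hl x
    rw [pmap_succ X k hk l hl hkl, pmap_succ Y k hk l hl hkl, ← ih (by omega)]
    exact (LinearMap.congr_fun (f.comm ⟨l, by omega⟩) (pmap X k hk l (by omega) hkl x)).symm

/-- the "coming from below k" submodule at vertex l -/
noncomputable def belowSub (W : ARep K n) (k l : ℕ) (hl : l < n) (hkl : k ≤ l) :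
    Submodule K (W.V ⟨l, hl⟩) :=
  if h : k = 0 then ⊥ else LinearMap.range (pmap W (k-1) (by omega) l hl (by omega))

/-- Reachability: some element at vertex k maps at vertex l outside of what comes
from vertices below k. -/
def Reach (W : ARep K n) (k l : ℕ) : Prop :=
  ∃ (hk : k < n) (hl : l < n) (hkl : k ≤ l) (v : W.V ⟨k, hk⟩),
    pmap W k hk l hl hkl v ∉ belowSub W k l hl hkl

end QRep

end Tors
namespace QRep

variable {K : Type} [Field K]

section IsoLemmas

variable {ι E : Type} {s t : E → ι}

/-- composition of morphisms -/
def Hom.compHom {X Y Z : QRep K s t} (g : Hom Y Z) (f : Hom X Y) : Hom X Z where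
  φ i := (g.φ i).comp (f.φ i)
  comm e := by
    ext x
    have h1 := LinearMap.congr_fun (g.comm e) ((f.φ (s e)) x)
    have h2 := LinearMap.congr_fun (f.comm e) x
    simp only [LinearMap.comp_apply] at h1 h2 ⊢
    rw [h2] at h1
    exact h1

theorem Iso.refl (X : QRep K s t) : Iso X X :=
  ⟨⟨fun _ => LinearMap.id, fun _ => rfl⟩, fun _ => Function.bijective_id⟩

theorem Iso.trans {X Y Z : QRep K s t} (h1 : Iso X Y) (h2 : Iso Y Z) : Iso X Z := by
  obtain ⟨f, hf⟩ := h1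
  obtain ⟨g, hg⟩ := h2
  exact ⟨g.compHom f, fun i => (hg i).comp (hf i)⟩

theorem Iso.symm {X Y : QRep K s t} (h : Iso X Y) : Iso Y X := by
  obtain ⟨f, hf⟩ := h
  let e : ∀ i, X.V i ≃ₗ[K] Y.V i := fun i => LinearEquiv.ofBijective (f.φ i) (hf i)
  refine ⟨⟨fun i => (e i).symm.toLinearMap, fun a => ?_⟩, fun i => (e i).symm.bijective⟩
  ext y
  simp only [LinearMap.comp_apply, LinearEquiv.coe_coe]
  apply (e (t a)).injective
  rw [LinearEquiv.apply_symm_apply]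
  have : ∀ x, (e (t a)) ((X.f a) x) = (Y.f a) ((e (s a)) x) := by
    intro x
    exact (LinearMap.congr_fun (f.comm a) x).symm
  rw [this, LinearEquiv.apply_symm_apply]

theorem Iso.dsum_congr {A A' B B' : QRep K s t} (hA : Iso A A') (hB : Iso B B') :
    Iso (A.dsum B) (A'.dsum B') := by
  obtain ⟨f, hf⟩ := hA
  obtain ⟨g, hg⟩ := hB
  refine ⟨⟨fun i => (f.φ i).prodMap (g.φ i), fun e => ?_⟩, fun i => ?_⟩
  · ext x
    have h1 := LinearMap.congr_fun (f.comm e) x.1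
    have h2 := LinearMap.congr_fun (g.comm e) x.2
    simp only [LinearMap.comp_apply] at h1 h2 ⊢
    exact Prod.ext h1 h2
  · exact Function.Bijective.prodMap (hf i) (hg i)

theorem Iso.dsum_zero (A : QRep K s t) : Iso A (A.dsum zero) := by
  refine ⟨⟨fun i => LinearMap.prod LinearMap.id 0, fun e => rfl⟩, fun i => ⟨?_, ?_⟩⟩
  · intro x y hxy
    exact congrArg Prod.fst hxy
  · rintro ⟨x, u⟩
    exact ⟨x, Prod.ext rfl (Subsingleton.elim (α := PUnit) _ _)⟩

theorem iso_zero_of_isZero {A : QRep K s t} (h : IsZero A) : Iso A zero := by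
  refine ⟨⟨fun i => 0, fun e => by
    ext x; exact Subsingleton.elim (α := PUnit) _ _⟩, fun i => ⟨?_, ?_⟩⟩
  · intro x y _; rw [h i x, h i y]
  · intro u; exact ⟨0, Subsingleton.elim (α := PUnit) _ _⟩

end IsoLemmas

section ReachLemmas

variable {n : ℕ}

/-- Reach pulls back along vertexwise-surjective morphisms. -/
theorem reach_of_surj {X Y : ARep K n} (f : Hom X Y) (hs : f.Surjective)
    {k l : ℕ} (h : Reach Y k l) : Reach X k l := by
  obtain ⟨hk, hl, hkl, y, hy⟩ := h
  obtain ⟨x, hx⟩ := hs ⟨k, hk⟩ y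
  refine ⟨hk, hl, hkl, x, fun hmem => hy ?_⟩
  unfold belowSub at hmem ⊢
  by_cases h0 : k = 0
  · rw [dif_pos h0] at hmem ⊢
    have : pmap X k hk l hl hkl x = 0 := by simpa using hmem
    have := congrArg (f.φ ⟨l, hl⟩) this
    rw [pmap_natural f k hk l hkl hl x, hx] at this
    simpa using this
  · rw [dif_neg h0] at hmem ⊢
    obtain ⟨u, hu⟩ := hmem
    refine ⟨f.φ ⟨k-1, by omega⟩ u, ?_⟩
    rw [← pmap_natural f (k-1) (by omega) l (by omega) hl u, hu,
      pmap_natural f k hk l hkl hl x, hx]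

/-- Reach pushes forward along vertexwise-bijective morphisms. -/
theorem reach_of_iso {X Y : ARep K n} (f : Hom X Y) (hb : ∀ i, Function.Bijective (f.φ i))
    {k l : ℕ} (h : Reach X k l) : Reach Y k l := by
  obtain ⟨hk, hl, hkl, x, hx⟩ := h
  refine ⟨hk, hl, hkl, f.φ ⟨k, hk⟩ x, fun hmem => hx ?_⟩
  unfold belowSub at hmem ⊢
  by_cases h0 : k = 0
  · rw [dif_pos h0] at hmem ⊢
    have : f.φ ⟨l, hl⟩ (pmap X k hk l hl hkl x) = 0 := by
      rw [pmap_natural f k hk l hkl hl x]; simpa using hmem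
    have := (hb ⟨l, hl⟩).1 (by simpa using this : f.φ ⟨l, hl⟩ (pmap X k hk l hl hkl x) = f.φ ⟨l, hl⟩ 0)
    simpa using this
  · rw [dif_neg h0] at hmem ⊢
    obtain ⟨w, hw⟩ := hmem
    obtain ⟨u, hu⟩ := (hb ⟨k-1, by omega⟩).2 w
    refine ⟨u, (hb ⟨l, hl⟩).1 ?_⟩
    rw [pmap_natural f (k-1) (by omega) l (by omega) hl u, hu, hw,
      ← pmap_natural f k hk l hkl hl x]

/-- pmap of a direct sum is the product of the pmaps. -/
theorem pmap_dsum {A B : ARep K n} (k : ℕ) (hk : k < n) :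
    ∀ (l : ℕ) (hkl : k ≤ l) (hl : l < n) (x : (A.dsum B).V ⟨k, hk⟩),
      pmap (A.dsum B) k hk l hl hkl x
        = (pmap A k hk l hl hkl x.1, pmap B k hk l hl hkl x.2) := by
  intro l hkl
  induction l, hkl using Nat.le_induction with
  | base => intro hl x; rw [pmap_self, pmap_self, pmap_self]; rfl
  | succ l hkl ih =>
    intro hl x
    rw [pmap_succ _ k hk l hl hkl, pmap_succ _ k hk l hl hkl, pmap_succ _ k hk l hl hkl,
      ih (by omega)]
    rfl

theorem reach_dsum_iff {A B : ARep K n} {k l : ℕ} :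
    Reach (A.dsum B) k l ↔ Reach A k l ∨ Reach B k l := by
  constructor
  · rintro ⟨hk, hl, hkl, x, hx⟩
    by_cases hA : pmap A k hk l hl hkl x.1 ∉ belowSub A k l hl hkl
    · exact Or.inl ⟨hk, hl, hkl, x.1, hA⟩
    · push_neg at hA
      refine Or.inr ⟨hk, hl, hkl, x.2, fun hB => hx ?_⟩
      unfold belowSub at hA hB ⊢
      by_cases h0 : k = 0
      · rw [dif_pos h0] at hA hB ⊢
        rw [pmap_dsum]
        simp only [Submodule.mem_bot] at hA hB ⊢
        rw [hA, hB]; rfl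
      · rw [dif_neg h0] at hA hB ⊢
        obtain ⟨u, hu⟩ := hA
        obtain ⟨w, hw⟩ := hB
        refine ⟨(u, w), ?_⟩
        rw [pmap_dsum]
        exact (pmap_dsum (A := A) (B := B) (k-1) (by omega) l (by omega) hl (u, w)).trans (Prod.ext hu hw)
  · rintro (⟨hk, hl, hkl, x, hx⟩ | ⟨hk, hl, hkl, x, hx⟩)
    · refine ⟨hk, hl, hkl, (x, 0), fun hmem => hx ?_⟩
      unfold belowSub at hmem ⊢
      by_cases h0 : k = 0
      · rw [dif_pos h0] at hmem ⊢
        rw [pmap_dsum (A := A) (B := B) k hk l hkl hl (x, 0)] at hmem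
        exact (Submodule.mem_bot K).2 (congrArg Prod.fst ((Submodule.mem_bot K (M := (A.dsum B).V ⟨l, hl⟩)).1 hmem))
      · rw [dif_neg h0] at hmem ⊢
        obtain ⟨u, hu⟩ := hmem
        rw [pmap_dsum, pmap_dsum (A := A) (B := B) k hk l hkl hl (x, 0)] at hu
        exact ⟨u.1, congrArg Prod.fst hu⟩
    · refine ⟨hk, hl, hkl, (0, x), fun hmem => hx ?_⟩
      unfold belowSub at hmem ⊢
      by_cases h0 : k = 0
      · rw [dif_pos h0] at hmem ⊢
        rw [pmap_dsum (A := A) (B := B) k hk l hkl hl (0, x)] at hmem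
        exact (Submodule.mem_bot K).2 (congrArg Prod.snd ((Submodule.mem_bot K (M := (A.dsum B).V ⟨l, hl⟩)).1 hmem))
      · rw [dif_neg h0] at hmem ⊢
        obtain ⟨u, hu⟩ := hmem
        rw [pmap_dsum, pmap_dsum (A := A) (B := B) k hk l hkl hl (0, x)] at hu
        exact ⟨u.2, congrArg Prod.snd hu⟩

end ReachLemmas

end QRep
section EijLemmas

variable {K : Type} [Field K] {n : ℕ}

open QRep

theorem ESub_eq_top_iff {i j : ℕ} {p : Fin n} :
    ESub K n i j p = ⊤ ↔ (i ≤ p.val ∧ p.val ≤ j) := by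
  unfold ESub
  split_ifs with h
  · simp [h]
  · exact iff_of_false (fun h' => one_ne_zero ((Submodule.mem_bot K).1 (show (1:K) ∈ (⊥ : Submodule K K) by rw [h']; exact Submodule.mem_top))) h

theorem mem_ESub {i j : ℕ} {p : Fin n} (c : K) (h : i ≤ p.val ∧ p.val ≤ j) :
    c ∈ ESub K n i j p := by
  unfold ESub; rw [if_pos h]; trivial

/-- the value in `K` of an element of an interval representation -/
def evalE {i j : ℕ} {p : Fin n} (x : (Eij K n i j).V p) : K :=
  Subtype.val (show ESub K n i j p from x)

theorem evalE_inj {i j : ℕ} {p : Fin n} {x y : (Eij K n i j).V p}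
    (h : evalE x = evalE y) : x = y := Subtype.ext h

theorem evalE_zero {i j : ℕ} {p : Fin n} : evalE (0 : (Eij K n i j).V p) = 0 := rfl

theorem ESub_elem_zero {i j : ℕ} {p : Fin n} (h : ¬(i ≤ p.val ∧ p.val ≤ j))
    (x : (Eij K n i j).V p) : x = 0 := by
  have hbot : ESub K n i j p = ⊥ := by unfold ESub; exact if_neg h
  have hx : evalE x ∈ ESub K n i j p := (show ESub K n i j p from x).property
  rw [hbot, Submodule.mem_bot] at hx
  apply evalE_inj
  rw [hx, evalE_zero]

theorem toSub_val {M : Type} [AddCommGroup M] [Module K M] (T : Submodule K M)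
    (hT : T = ⊤) (x : M) : ((toSub T x : T) : M) = x := by
  unfold toSub; rw [dif_pos hT]; rfl

theorem toSub_zero {M : Type} [AddCommGroup M] [Module K M] (T : Submodule K M)
    (hT : T ≠ ⊤) (x : M) : toSub T x = 0 := by
  unfold toSub; rw [dif_neg hT]; rfl

theorem Eij_step_val (i j m : ℕ) (hm : m + 1 < n) (x : (Eij K n i j).V ⟨m, by omega⟩) :
    evalE (stepMap (Eij K n i j) m hm x)
      = if i ≤ m + 1 ∧ m + 1 ≤ j then evalE x else 0 := by
  show evalE (show (Eij K n i j).V ⟨m+1, hm⟩ from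
      toSub (ESub K n i j ⟨m+1, hm⟩) (evalE x)) = _
  by_cases h : i ≤ m + 1 ∧ m + 1 ≤ j
  · rw [if_pos h]
    exact toSub_val _ (ESub_eq_top_iff.2 h) _
  · rw [if_neg h]
    rw [toSub_zero _ (fun ht => h (ESub_eq_top_iff.1 ht)) _]
    rfl

theorem Eij_pmap_val (i j k : ℕ) (hk : k < n) (hik : i ≤ k) :
    ∀ (l : ℕ) (hkl : k ≤ l) (hl : l < n) (hlj : l ≤ j) (x : (Eij K n i j).V ⟨k, hk⟩),
      evalE (pmap (Eij K n i j) k hk l hl hkl x) = evalE x := by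
  intro l hkl
  induction l, hkl using Nat.le_induction with
  | base => intro hl hlj x; rw [pmap_self]
  | succ l hkl ih =>
    intro hl hlj x
    rw [pmap_succ _ k hk l hl hkl, Eij_step_val i j l hl,
      if_pos ⟨by omega, hlj⟩, ih (by omega) (by omega)]

theorem reach_Eij_self (i j : ℕ) (hij : i ≤ j) (hj : j < n) : Reach (Eij K n i j) i j := by
  have hi : i < n := by omega
  have hmem1 : (1 : K) ∈ ESub K n i j ⟨i, hi⟩ := mem_ESub 1 ⟨le_rfl, hij⟩
  refine ⟨hi, hj, hij, ⟨1, hmem1⟩, fun hmem => ?_⟩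
  have hval : evalE (pmap (Eij K n i j) i hi j hj hij ⟨1, hmem1⟩) = 1 :=
    Eij_pmap_val i j i hi le_rfl j hij hj le_rfl _
  unfold belowSub at hmem
  by_cases h0 : i = 0
  · rw [dif_pos h0] at hmem
    rw [Submodule.mem_bot] at hmem
    rw [hmem, evalE_zero] at hval
    simpa using hval
  · rw [dif_neg h0] at hmem
    obtain ⟨w, hw⟩ := hmem
    have hw0 : w = 0 := ESub_elem_zero (by show ¬(i ≤ i - 1 ∧ _); omega) w
    rw [hw0, map_zero] at hw
    rw [← hw, evalE_zero] at hval
    simpa using hval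

theorem reach_Eij_imp {i j k l : ℕ} (h : Reach (Eij K n i j) k l) : i = k ∧ l ≤ j := by
  obtain ⟨hk, hl, hkl, v, hv⟩ := h
  have hne : pmap (Eij K n i j) k hk l hl hkl v ≠ 0 := fun h0 => hv (h0 ▸ Submodule.zero_mem _)
  have hvne : v ≠ 0 := fun h0 => hne (by rw [h0, map_zero])
  have hkin : i ≤ k ∧ k ≤ j := by
    by_contra hc
    exact hvne (ESub_elem_zero (by show ¬(i ≤ k ∧ k ≤ j); exact hc) v)
  have hlin : i ≤ l ∧ l ≤ j := by
    by_contra hc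
    exact hne (ESub_elem_zero (by show ¬(i ≤ l ∧ l ≤ j); exact hc) _)
  refine ⟨?_, hlin.2⟩
  by_contra hik
  have hk0 : k ≠ 0 := by omega
  apply hv
  unfold belowSub
  rw [dif_neg hk0]
  have hmemw : (evalE v) ∈ ESub K n i j ⟨k-1, by omega⟩ :=
    mem_ESub _ ⟨by show i ≤ k-1; omega, by show k-1 ≤ j; omega⟩
  refine ⟨⟨evalE v, hmemw⟩, evalE_inj ?_⟩
  exact (Eij_pmap_val i j (k-1) (by omega) (by show i ≤ k-1; omega) l (by omega) hl hlin.2 _).trans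
    (Eij_pmap_val i j k hk hkin.1 l hkl hl hlin.2 v).symm

theorem intervalSum_cons (pr : ℕ × ℕ) (L : List (ℕ × ℕ)) :
    intervalSum K n (pr :: L) = (Eij K n pr.1 pr.2).dsum (intervalSum K n L) := rfl

theorem reach_zero_false {k l : ℕ} (h : Reach (zero : ARep K n) k l) : False := by
  obtain ⟨hk, hl, hkl, v, hv⟩ := h
  exact hv (by
    have : pmap (zero : ARep K n) k hk l hl hkl v = 0 := Subsingleton.elim (α := PUnit) _ _
    rw [this]; exact Submodule.zero_mem _)

theorem reach_intervalSum_imp {L : List (ℕ × ℕ)} {k l : ℕ}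
    (h : Reach (intervalSum K n L) k l) : ∃ pr ∈ L, pr.1 = k ∧ l ≤ pr.2 := by
  induction L with
  | nil => exact absurd h reach_zero_false
  | cons pr L ih =>
    rw [intervalSum_cons] at h
    rcases reach_dsum_iff.1 h with h1 | h2
    · obtain ⟨h1, h2⟩ := reach_Eij_imp h1
      exact ⟨pr, List.mem_cons_self, h1, h2⟩
    · obtain ⟨pr', hmem, hh⟩ := ih h2
      exact ⟨pr', List.mem_cons_of_mem _ hmem, hh⟩

theorem reach_intervalSum_mem {L : List (ℕ × ℕ)} {pr : ℕ × ℕ} (hmem : pr ∈ L)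
    (h1 : pr.1 ≤ pr.2) (h2 : pr.2 < n) : Reach (intervalSum K n L) pr.1 pr.2 := by
  induction L with
  | nil => simp at hmem
  | cons q L ih =>
    rw [intervalSum_cons]
    rcases List.mem_cons.1 hmem with h | h
    · subst h
      exact reach_dsum_iff.2 (Or.inl (reach_Eij_self pr.1 pr.2 h1 h2))
    · exact reach_dsum_iff.2 (Or.inr (ih h))

/-- A representation is `a`-good if every reachability pair satisfies the `C_a` bound. -/
def GoodRep (a : ℕ → ℕ) (W : ARep K n) : Prop :=
  ∀ k l : ℕ, Reach W k l → l < k + a k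

theorem goodRep_of_inCat {a : ℕ → ℕ} {X : ARep K n} (h : InCat K n (condF n a) X) :
    GoodRep a X := by
  obtain ⟨L, hL, f, hf⟩ := h
  intro k l hr
  obtain ⟨pr, hmem, h1, h2⟩ := reach_intervalSum_imp (reach_of_iso f hf hr)
  have := hL pr hmem
  unfold condF at this
  subst h1
  omega

end EijLemmas
section ExtLemma

variable {K : Type} [Field K] {n : ℕ}

open QRep

/-- auxiliary predicate: by vertex `i'`, the element has entered `X` modulo stuff from below -/
def QP {X Y Z : ARep K n} (E : Extension X Y Z) (k l : ℕ) (hk : k < n) (hl : l < n)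
    (hkl : k ≤ l) (y : Y.V ⟨k, hk⟩) (i' : ℕ) : Prop :=
  k ≤ i' ∧ i' ≤ l ∧ ∃ (hi : i' < n) (hil : i' ≤ l)
    (x : X.V ⟨i', hi⟩) (b : Y.V ⟨l, hl⟩), b ∈ belowSub Y k l hl hkl ∧
      pmap Y k hk l hl hkl y
        = E.incl.φ ⟨l, hl⟩ (pmap X i' hi l hl hil x) + b

theorem goodRep_ext {a : ℕ → ℕ} (hbr : IsBracketVecN n a) {X Y Z : ARep K n}
    (E : Extension X Y Z) (hX : GoodRep a X) (hZ : GoodRep a Z) : GoodRep a Y := by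
  intro k l hr
  obtain ⟨hk, hl, hkl, y, hy⟩ := hr
  by_cases hQl : QP E k l hk hl hkl y l
  · -- the minimal index where the element has entered X
    have hQex : ∃ i', QP E k l hk hl hkl y i' := ⟨l, hQl⟩
    obtain ⟨i'', hspec, hmin⟩ : ∃ i'', QP E k l hk hl hkl y i'' ∧
        ∀ m, m < i'' → ¬ QP E k l hk hl hkl y m :=
      ⟨Nat.find hQex, Nat.find_spec hQex, fun m hm => Nat.find_min hQex hm⟩
    obtain ⟨hki, hil, hi, hil', xs, b, hb, heq⟩ := hspec
    -- Claim A : Reach X i'' l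
    have hRX : Reach X i'' l := by
      refine ⟨hi, hl, hil', xs, fun hmem => ?_⟩
      unfold belowSub at hmem
      by_cases h0 : i'' = 0
      · rw [dif_pos h0, Submodule.mem_bot] at hmem
        rw [hmem, map_zero, zero_add] at heq
        exact hy (heq ▸ hb)
      · rw [dif_neg h0] at hmem
        obtain ⟨x', hx'⟩ := hmem
        by_cases hik : i'' = k
        · subst hik
          apply hy
          rw [heq, ← hx', pmap_natural E.incl (i''-1) (by omega) l (by omega) hl x']
          refine Submodule.add_mem _ ?_ hb
          unfold belowSub
          rw [dif_neg h0]
          exact ⟨E.incl.φ ⟨i''-1, by omega⟩ x', rfl⟩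
        · exact hmin (i''-1) (by omega) ⟨by omega, by omega, by omega, by omega, x', b, hb,
            by rw [hx']; exact heq⟩
    have hXbound : l < i'' + a i'' := hX i'' l hRX
    by_cases hik : i'' = k
    · subst hik; omega
    · -- Claim B : Reach Z k (i''-1)
      have hm : i'' - 1 < n := by omega
      have hkm : k ≤ i'' - 1 := by omega
      have hRZ : Reach Z k (i''-1) := by
        refine ⟨hk, hm, hkm, E.proj.φ ⟨k, hk⟩ y, fun hmem => ?_⟩
        unfold belowSub at hmem
        by_cases h0 : k = 0
        · rw [dif_pos h0, Submodule.mem_bot] at hmem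
          rw [← pmap_natural E.proj k hk (i''-1) hkm hm y] at hmem
          have hker : pmap Y k hk (i''-1) hm hkm y ∈ LinearMap.range (E.incl.φ ⟨i''-1, hm⟩) := by
            rw [← E.exact ⟨i''-1, hm⟩]
            exact LinearMap.mem_ker.2 hmem
          obtain ⟨xh, hxh⟩ := hker
          apply hmin (i''-1) (by omega)
          refine ⟨hkm, by omega, hm, by omega, xh, 0, Submodule.zero_mem _, ?_⟩
          rw [add_zero, pmap_natural E.incl (i''-1) hm l (by omega) hl xh, hxh,
            pmap_comp Y k (i''-1) hk hm hkm l (by omega) hl y]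
        · rw [dif_neg h0] at hmem
          obtain ⟨w, hw⟩ := hmem
          obtain ⟨u, hu⟩ := E.surj ⟨k-1, by omega⟩ w
          have hker : pmap Y k hk (i''-1) hm hkm y
              - pmap Y (k-1) (by omega) (i''-1) hm (by omega) u
              ∈ LinearMap.range (E.incl.φ ⟨i''-1, hm⟩) := by
            rw [← E.exact ⟨i''-1, hm⟩]
            refine LinearMap.mem_ker.2 ?_
            rw [map_sub, pmap_natural E.proj k hk (i''-1) hkm hm y,
              pmap_natural E.proj (k-1) (by omega) (i''-1) (by omega) hm u, hu, hw, sub_self]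
          obtain ⟨xh, hxh⟩ := hker
          apply hmin (i''-1) (by omega)
          refine ⟨hkm, by omega, hm, by omega, xh,
            pmap Y (k-1) (by omega) l hl (by omega) u, ?_, ?_⟩
          · unfold belowSub
            rw [dif_neg h0]
            exact ⟨u, rfl⟩
          · rw [pmap_natural E.incl (i''-1) hm l (by omega) hl xh, hxh, map_sub,
              pmap_comp Y k (i''-1) hk hm hkm l (by omega) hl y,
              pmap_comp Y (k-1) (i''-1) (by omega) hm (by omega) l (by omega) hl u]
            abel
      have hZbound : i'' - 1 < k + a k := hZ k (i''-1) hRZ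
      have hbrk : (i'' - k) + a (k + (i'' - k)) ≤ a k :=
        hbr k (by omega) (i'' - k) (by omega) (by omega) (by omega)
      rw [show k + (i'' - k) = i'' by omega] at hbrk
      omega
  · -- the element never enters X before l : use Z
    have hRZ : Reach Z k l := by
      refine ⟨hk, hl, hkl, E.proj.φ ⟨k, hk⟩ y, fun hmem => ?_⟩
      unfold belowSub at hmem
      by_cases h0 : k = 0
      · rw [dif_pos h0, Submodule.mem_bot] at hmem
        rw [← pmap_natural E.proj k hk l hkl hl y] at hmem
        have hker : pmap Y k hk l hl hkl y ∈ LinearMap.range (E.incl.φ ⟨l, hl⟩) := by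
          rw [← E.exact ⟨l, hl⟩]
          exact LinearMap.mem_ker.2 hmem
        obtain ⟨xh, hxh⟩ := hker
        exact hQl ⟨hkl, le_rfl, hl, le_rfl, xh, 0, Submodule.zero_mem _, by
          rw [add_zero, pmap_self, hxh]⟩
      · rw [dif_neg h0] at hmem
        obtain ⟨w, hw⟩ := hmem
        obtain ⟨u, hu⟩ := E.surj ⟨k-1, by omega⟩ w
        have hker : pmap Y k hk l hl hkl y - pmap Y (k-1) (by omega) l hl (by omega) u
            ∈ LinearMap.range (E.incl.φ ⟨l, hl⟩) := by
          rw [← E.exact ⟨l, hl⟩]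
          refine LinearMap.mem_ker.2 ?_
          rw [map_sub, pmap_natural E.proj k hk l hkl hl y,
            pmap_natural E.proj (k-1) (by omega) l (by omega) hl u, hu, hw, sub_self]
        obtain ⟨xh, hxh⟩ := hker
        refine absurd ?_ hQl
        refine ⟨hkl, le_rfl, hl, le_rfl, xh, pmap Y (k-1) (by omega) l hl (by omega) u, ?_, ?_⟩
        · unfold belowSub
          rw [dif_neg h0]
          exact ⟨u, rfl⟩
        · rw [pmap_self, hxh]
          abel
    exact hZ k l hRZ

end ExtLemma
section Gabriel

variable {K : Type} [Field K] {n : ℕ}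

open QRep

/-- total dimension of a representation -/
noncomputable def totdim (Y : ARep K n) : ℕ := ∑ p : Fin n, Module.finrank K (Y.V p)

theorem isZero_of_totdim_zero {Y : ARep K n} (h : totdim Y = 0) : IsZero Y := by
  intro p x
  have hp : Module.finrank K (Y.V p) = 0 := Finset.sum_eq_zero_iff.1 h p (Finset.mem_univ p)
  have : Subsingleton (Y.V p) := Module.finrank_zero_iff.1 hp
  exact Subsingleton.elim x 0

/-- general splitting: complementary stable subspaces give a direct sum decomposition -/
theorem iso_of_isCompl {ι E : Type} {s t : E → ι} {X : QRep K s t} (S T : Sub X)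
    (h : ∀ i, IsCompl (S.p i) (T.p i)) : Iso ((S.toRep).dsum (T.toRep)) X := by
  refine ⟨⟨fun i => (Submodule.prodEquivOfIsCompl _ _ (h i)).toLinearMap, fun e => ?_⟩,
    fun i => (Submodule.prodEquivOfIsCompl _ _ (h i)).bijective⟩
  ext x
  show X.f e (x.1.val + x.2.val) = _
  rw [map_add]
  rfl

/-- the interval subrepresentation generated by `v` living on `[k,l]` -/
noncomputable def lineSub (Y : ARep K n) (k l : ℕ) (hk : k < n) (v : Y.V ⟨k, hk⟩)
    (p : Fin n) : Submodule K (Y.V p) :=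
  if h : k ≤ p.val ∧ p.val ≤ l then
    Submodule.span K {pmap Y k hk p.val p.isLt h.1 v} else ⊥

theorem lineSub_pos {Y : ARep K n} {k l : ℕ} {hk : k < n} {v : Y.V ⟨k, hk⟩}
    {p : Fin n} (h : k ≤ p.val ∧ p.val ≤ l) :
    lineSub Y k l hk v p = Submodule.span K {pmap Y k hk p.val p.isLt h.1 v} := dif_pos h

theorem lineSub_neg {Y : ARep K n} {k l : ℕ} {hk : k < n} {v : Y.V ⟨k, hk⟩}
    {p : Fin n} (h : ¬(k ≤ p.val ∧ p.val ≤ l)) :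
    lineSub Y k l hk v p = ⊥ := dif_neg h

/-- the complement subrepresentation determined by a complement `T'` at vertex `l` -/
noncomputable def compSub (Y : ARep K n) (l : ℕ) (hl : l < n)
    (T' : Submodule K (Y.V ⟨l, hl⟩)) (p : Fin n) : Submodule K (Y.V p) :=
  if h : p.val ≤ l then Submodule.comap (pmap Y p.val p.isLt l hl h) T' else ⊤

theorem compSub_pos {Y : ARep K n} {l : ℕ} {hl : l < n} {T' : Submodule K (Y.V ⟨l, hl⟩)}
    {p : Fin n} (h : p.val ≤ l) :
    compSub Y l hl T' p = Submodule.comap (pmap Y p.val p.isLt l hl h) T' := dif_pos h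

theorem compSub_neg {Y : ARep K n} {l : ℕ} {hl : l < n} {T' : Submodule K (Y.V ⟨l, hl⟩)}
    {p : Fin n} (h : ¬ p.val ≤ l) : compSub Y l hl T' p = ⊤ := dif_neg h

theorem ASrc_val (e : Fin (n-1)) : (ASrc n e).val = e.val := rfl
theorem ATgt_val (e : Fin (n-1)) : (ATgt n e).val = e.val + 1 := rfl

theorem lineSub_stable {Y : ARep K n} {k l : ℕ} {hk : k < n} (hkl : k ≤ l)
    {v : Y.V ⟨k, hk⟩}
    (hmax : ∀ (m : ℕ) (hm : m < n), l < m → ∀ x : Y.V ⟨m, hm⟩, x = 0)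
    (e : Fin (n-1)) : ∀ x ∈ lineSub Y k l hk v (ASrc n e),
      Y.f e x ∈ lineSub Y k l hk v (ATgt n e) := by
  intro x hx
  have he : (e : ℕ) < n - 1 := e.isLt
  have hm1 : e.val + 1 < n := by omega
  have hme : (e : ℕ) < n := by omega
  have hxm : x ∈ lineSub Y k l hk v ⟨e.val, hme⟩ := hx
  by_cases h : k ≤ e.val ∧ e.val ≤ l
  · rw [lineSub_pos (p := (⟨e.val, hme⟩ : Fin n))
      ⟨(h.1 : k ≤ e.val), (h.2 : e.val ≤ l)⟩] at hxm
    have hx' : x ∈ Submodule.span K {pmap Y k hk e.val hme h.1 v} := hxm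
    by_cases h2 : e.val + 1 ≤ l
    · show Y.f e x ∈ lineSub Y k l hk v ⟨e.val + 1, hm1⟩
      rw [lineSub_pos (p := (⟨e.val + 1, hm1⟩ : Fin n))
        ⟨(by omega : k ≤ e.val + 1), (h2 : e.val + 1 ≤ l)⟩]
      show Y.f e x ∈ Submodule.span K {pmap Y k hk (e.val+1) hm1 (by omega) v}
      obtain ⟨c, hc⟩ := (Submodule.mem_span_singleton (R := K) (M := Y.V ⟨e.val, hme⟩)).1 hx'
      subst hc
      refine (Submodule.mem_span_singleton (R := K) (M := Y.V ⟨e.val + 1, hm1⟩)).2 ⟨c, ?_⟩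
      exact (congrArg (c • ·) (pmap_succ Y k hk e.val hm1 h.1 (by omega) v)).trans (map_smul (Y.f e) c _).symm
    · have : Y.f e x = 0 := hmax (e.val + 1) hm1 (by omega) _
      rw [this]
      exact Submodule.zero_mem _
  · rw [lineSub_neg (p := (⟨e.val, hme⟩ : Fin n))
      (fun hc => h ⟨hc.1, hc.2⟩)] at hxm
    have : Y.f e x = 0 :=
      (congrArg (Y.f e) ((Submodule.mem_bot K (M := Y.V ⟨e.val, hme⟩)).1 hxm)).trans (map_zero _)
    rw [this]
    exact Submodule.zero_mem _

theorem compSub_stable {Y : ARep K n} {l : ℕ} {hl : l < n}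
    {T' : Submodule K (Y.V ⟨l, hl⟩)} (e : Fin (n-1)) :
    ∀ x ∈ compSub Y l hl T' (ASrc n e), Y.f e x ∈ compSub Y l hl T' (ATgt n e) := by
  intro x hx
  have he : (e : ℕ) < n - 1 := e.isLt
  have hm1 : e.val + 1 < n := by omega
  have hme : (e : ℕ) < n := by omega
  have hxm : x ∈ compSub Y l hl T' ⟨e.val, hme⟩ := hx
  by_cases h2 : e.val + 1 ≤ l
  · rw [compSub_pos (p := (⟨e.val, hme⟩ : Fin n)) ((by omega : e.val ≤ l))] at hxm
    have hx' : pmap Y e.val (by omega) l hl (by omega) x ∈ T' := Submodule.mem_comap.1 hxm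
    show Y.f e x ∈ compSub Y l hl T' ⟨e.val + 1, hm1⟩
    rw [compSub_pos (p := (⟨e.val + 1, hm1⟩ : Fin n)) ((h2 : e.val + 1 ≤ l))]
    show pmap Y (e.val+1) hm1 l hl h2 (Y.f e x) ∈ T'
    have hstep : pmap Y e.val (by omega) (e.val+1) hm1 (by omega) x = Y.f e x := by
      exact (pmap_succ Y e.val (by omega) e.val hm1 le_rfl (by omega) x).trans
        (congrArg (stepMap Y e.val hm1) (pmap_self Y e.val hme hme le_rfl x))
    have hcmp := pmap_comp Y e.val (e.val+1) (by omega) hm1 (by omega) l h2 hl x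
    rw [hstep] at hcmp
    show pmap Y (e.val+1) hm1 l hl h2 (Y.f e x) ∈ T'
    rw [hcmp]
    exact hx'
  · show Y.f e x ∈ compSub Y l hl T' ⟨e.val + 1, hm1⟩
    rw [compSub_neg (p := (⟨e.val + 1, hm1⟩ : Fin n)) ((by omega : ¬ (e.val + 1) ≤ l))]
    trivial

theorem isCompl_line_comp {Y : ARep K n} {k l : ℕ} {hk : k < n} {hl : l < n} (hkl : k ≤ l)
    {v : Y.V ⟨k, hk⟩} {T' : Submodule K (Y.V ⟨l, hl⟩)}
    (hv : pmap Y k hk l hl hkl v ≠ 0)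
    (hT' : IsCompl (Submodule.span K {pmap Y k hk l hl hkl v}) T')
    (hlow : ∀ (m : ℕ) (hm : m < n) (hml : m ≤ l), m < k →
      ∀ x : Y.V ⟨m, hm⟩, pmap Y m hm l hl hml x = 0)
    (p : Fin n) : IsCompl (lineSub Y k l hk v p) (compSub Y l hl T' p) := by
  by_cases hpl : p.val ≤ l
  · by_cases hpk : k ≤ p.val
    · rw [lineSub_pos (p := p) ⟨hpk, hpl⟩, compSub_pos (p := p) hpl]
      constructor
      · rw [Submodule.disjoint_def]
        intro x hx1 hx2
        obtain ⟨c, hc⟩ := Submodule.mem_span_singleton.1 hx1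
        have hx2' : pmap Y p.val p.isLt l hl hpl x ∈ T' := Submodule.mem_comap.1 hx2
        rw [← hc, map_smul, pmap_comp Y k p.val hk p.isLt hpk l hpl hl v] at hx2'
        have hdis := Submodule.disjoint_def.1 hT'.disjoint _
          (Submodule.smul_mem _ c (Submodule.mem_span_singleton_self _)) hx2'
        rcases smul_eq_zero.1 hdis with hc0 | hg0
        · rw [← hc, hc0, zero_smul]
        · exact absurd hg0 hv
      · rw [codisjoint_iff, Submodule.eq_top_iff']
        intro x
        have htop : pmap Y p.val p.isLt l hl hpl x ∈
            Submodule.span K {pmap Y k hk l hl hkl v} ⊔ T' := by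
          rw [codisjoint_iff.1 hT'.codisjoint]
          trivial
        obtain ⟨b1, hb1, b2, hb2, hsum⟩ := Submodule.mem_sup.1 htop
        obtain ⟨c, hc⟩ := Submodule.mem_span_singleton.1 hb1
        refine Submodule.mem_sup.2 ⟨c • pmap Y k hk p.val p.isLt hpk v,
          Submodule.smul_mem _ _ (Submodule.mem_span_singleton_self _),
          x - c • pmap Y k hk p.val p.isLt hpk v, ?_, by abel⟩
        refine Submodule.mem_comap.2 ?_
        rw [map_sub, map_smul, pmap_comp Y k p.val hk p.isLt hpk l hpl hl v, hc, ← hsum]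
        simpa using hb2
    · rw [lineSub_neg (p := p) (by omega), compSub_pos (p := p) hpl]
      have : Submodule.comap (pmap Y p.val p.isLt l hl hpl) T' = ⊤ := by
        rw [Submodule.eq_top_iff']
        intro x
        rw [Submodule.mem_comap, hlow p.val p.isLt hpl (by omega) x]
        exact Submodule.zero_mem _
      rw [this]
      exact isCompl_bot_top
  · rw [lineSub_neg (p := p) (by omega), compSub_neg (p := p) hpl]
    exact isCompl_bot_top

end Gabriel
section Gabriel2

variable {K : Type} [Field K] {n : ℕ}

open QRep

/-- the generating vector of the line subrepresentation at each vertex -/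
noncomputable def lineVec (Y : ARep K n) (k l : ℕ) (hk : k < n) (v : Y.V ⟨k, hk⟩)
    (p : Fin n) : Y.V p :=
  if h : k ≤ p.val ∧ p.val ≤ l then pmap Y k hk p.val p.isLt h.1 v else 0

theorem lineVec_pos {Y : ARep K n} {k l : ℕ} {hk : k < n} {v : Y.V ⟨k, hk⟩}
    {p : Fin n} (h : k ≤ p.val ∧ p.val ≤ l) :
    lineVec Y k l hk v p = pmap Y k hk p.val p.isLt h.1 v := dif_pos h

theorem lineVec_neg {Y : ARep K n} {k l : ℕ} {hk : k < n} {v : Y.V ⟨k, hk⟩}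
    {p : Fin n} (h : ¬(k ≤ p.val ∧ p.val ≤ l)) : lineVec Y k l hk v p = 0 := dif_neg h

theorem lineVec_mem {Y : ARep K n} {k l : ℕ} {hk : k < n} {v : Y.V ⟨k, hk⟩} (p : Fin n) :
    lineVec Y k l hk v p ∈ lineSub Y k l hk v p := by
  by_cases h : k ≤ p.val ∧ p.val ≤ l
  · rw [lineVec_pos h, lineSub_pos h]
    exact Submodule.mem_span_singleton_self _
  · rw [lineVec_neg h]
    exact Submodule.zero_mem _

theorem iso_Eij_lineSub {Y : ARep K n} {k l : ℕ} {hk : k < n} {hl : l < n} (hkl : k ≤ l)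
    (v : Y.V ⟨k, hk⟩) (hv : pmap Y k hk l hl hkl v ≠ 0)
    (hmax : ∀ (m : ℕ) (hm : m < n), l < m → ∀ x : Y.V ⟨m, hm⟩, x = 0)
    (stab : ∀ e : Fin (n-1), ∀ x ∈ lineSub Y k l hk v (ASrc n e),
      Y.f e x ∈ lineSub Y k l hk v (ATgt n e)) :
    Iso (Eij K n k l) ((⟨lineSub Y k l hk v, stab⟩ : Sub Y).toRep) := by
  have hlineVec_ne : ∀ (p : Fin n) (h : k ≤ p.val ∧ p.val ≤ l), lineVec Y k l hk v p ≠ 0 := by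
    intro p h h0
    apply hv
    rw [← pmap_comp Y k p.val hk p.isLt h.1 l h.2 hl v]
    rw [lineVec_pos h] at h0
    rw [h0, map_zero]
  refine ⟨⟨fun p => LinearMap.codRestrict (lineSub Y k l hk v p)
      ((LinearMap.toSpanSingleton K (Y.V p) (lineVec Y k l hk v p)).comp
        (ESub K n k l p).subtype)
      (fun c => Submodule.smul_mem _ _ (lineVec_mem p)), fun e => ?_⟩, fun p => ?_⟩
  · -- commutation
    ext c
    have he : (e : ℕ) < n - 1 := e.isLt
    have hm1 : e.val + 1 < n := by omega
    have hme : (e : ℕ) < n := by omega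
    apply Subtype.ext
    show Y.f e (evalE c • lineVec Y k l hk v (ASrc n e))
      = (evalE ((Eij K n k l).f e c)) • lineVec Y k l hk v (ATgt n e)
    have hstepval : evalE ((Eij K n k l).f e c)
        = if k ≤ e.val + 1 ∧ e.val + 1 ≤ l then evalE c else 0 :=
      Eij_step_val k l e.val hm1 c
    by_cases h2 : e.val + 1 ≤ l
    · by_cases h : k ≤ e.val ∧ e.val ≤ l
      · rw [hstepval, if_pos ⟨by omega, h2⟩, map_smul]
        congr 1
        rw [show lineVec Y k l hk v (ASrc n e)
            = pmap Y k hk e.val hme h.1 v from lineVec_pos (p := ASrc n e) ⟨h.1, h.2⟩,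
          show lineVec Y k l hk v (ATgt n e)
            = pmap Y k hk (e.val+1) hm1 (by omega) v from
            lineVec_pos (p := ATgt n e) ⟨(by omega : k ≤ e.val + 1), (h2 : e.val + 1 ≤ l)⟩,
          pmap_succ Y k hk e.val hm1 h.1 (by omega)]
        rfl
      · have hc0 : c = 0 := ESub_elem_zero (fun hcc => h ⟨hcc.1, by omega⟩) c
        rw [hc0, evalE_zero, zero_smul, map_zero, map_zero, evalE_zero, zero_smul]
    · exact (hmax (e.val+1) hm1 (by omega) _).trans
        (hmax (e.val+1) hm1 (by omega) _).symm
  · -- bijectivity at each vertex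
    constructor
    · intro c₁ c₂ hcc
      by_cases h : k ≤ p.val ∧ p.val ≤ l
      · have hval : evalE c₁ • lineVec Y k l hk v p = evalE c₂ • lineVec Y k l hk v p :=
          congrArg Subtype.val hcc
        have hsube : (evalE c₁ - evalE c₂) • lineVec Y k l hk v p = 0 := by
          rw [sub_smul, hval, sub_self]
        rcases smul_eq_zero.1 hsube with hc | hw
        · exact evalE_inj (sub_eq_zero.1 hc)
        · exact absurd hw (hlineVec_ne p h)
      · rw [ESub_elem_zero h c₁, ESub_elem_zero h c₂]
    · intro y
      by_cases h : k ≤ p.val ∧ p.val ≤ l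
      · have hy : (y.1 : Y.V p) ∈ lineSub Y k l hk v p := y.2
        rw [lineSub_pos h] at hy
        obtain ⟨c, hc⟩ := Submodule.mem_span_singleton.1 hy
        refine ⟨⟨c, mem_ESub c h⟩, Subtype.ext ?_⟩
        show c • lineVec Y k l hk v p = y.1
        rw [lineVec_pos h, hc]
      · have hy : (y.1 : Y.V p) ∈ lineSub Y k l hk v p := y.2
        rw [lineSub_neg h, Submodule.mem_bot] at hy
        refine ⟨0, Subtype.ext ?_⟩
        show (0 : ESub K n k l p).val • lineVec Y k l hk v p = y.1
        rw [hy]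
        show (0:K) • _ = (0 : Y.V p)
        rw [zero_smul]

theorem gabriel (Y : ARep K n) : ∃ L : List (ℕ × ℕ),
    (∀ pr ∈ L, pr.1 ≤ pr.2 ∧ pr.2 < n) ∧ QRep.Iso Y (intervalSum K n L) := by
  suffices H : ∀ (N : ℕ) (Y : ARep K n), totdim Y ≤ N → ∃ L : List (ℕ × ℕ),
      (∀ pr ∈ L, pr.1 ≤ pr.2 ∧ pr.2 < n) ∧ QRep.Iso Y (intervalSum K n L) from
    H (totdim Y) Y le_rfl
  intro N
  induction N with
  | zero =>
    intro Y hY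
    exact ⟨[], by simp, iso_zero_of_isZero (isZero_of_totdim_zero (Nat.le_zero.1 hY))⟩
  | succ N ih =>
    intro Y hY
    by_cases hz : IsZero Y
    · exact ⟨[], by simp, iso_zero_of_isZero hz⟩
    have hNZex : ∃ p : ℕ, ∃ (hp : p < n) (x : Y.V ⟨p, hp⟩), x ≠ 0 := by
      unfold IsZero at hz
      push_neg at hz
      obtain ⟨i, x, hx⟩ := hz
      exact ⟨i.val, i.isLt, x, hx⟩
    obtain ⟨p₀, hp₀, x₀', hx₀'⟩ := hNZex
    obtain ⟨l, ⟨hl, x₀, hx₀⟩, hmax⟩ : ∃ l, (∃ (hl : l < n) (x : Y.V ⟨l, hl⟩), x ≠ 0) ∧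
        (∀ m (hm : m < n), l < m → ∀ x : Y.V ⟨m, hm⟩, x = 0) := by
      refine ⟨Nat.findGreatest (fun p => ∃ (hp : p < n) (x : Y.V ⟨p, hp⟩), x ≠ 0) n,
        Nat.findGreatest_spec (m := p₀)
          (P := fun p => ∃ (hp : p < n) (x : Y.V ⟨p, hp⟩), x ≠ 0)
          (le_of_lt hp₀) ⟨hp₀, x₀', hx₀'⟩, ?_⟩
      intro m hm hlm x
      by_contra hx
      exact Nat.findGreatest_is_greatest
        (P := fun p => ∃ (hp : p < n) (x : Y.V ⟨p, hp⟩), x ≠ 0)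
        hlm (le_of_lt hm) ⟨hm, x, hx⟩
    obtain ⟨k, ⟨hk, hkl, v, hv⟩, hkmin⟩ : ∃ k, (∃ (hp : k < n) (hpl : k ≤ l)
        (v : Y.V ⟨k, hp⟩), pmap Y k hp l hl hpl v ≠ 0) ∧
        ∀ m, m < k → ¬ ∃ (hp : m < n) (hpl : m ≤ l) (v : Y.V ⟨m, hp⟩),
          pmap Y m hp l hl hpl v ≠ 0 := by
      have hRPex : ∃ p, ∃ (hp : p < n) (hpl : p ≤ l) (v : Y.V ⟨p, hp⟩),
          pmap Y p hp l hl hpl v ≠ 0 :=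
        ⟨l, hl, le_rfl, x₀, by rw [pmap_self]; exact hx₀⟩
      exact ⟨Nat.find hRPex, Nat.find_spec hRPex, fun m hm => Nat.find_min hRPex hm⟩
    have hlow : ∀ (m : ℕ) (hm : m < n) (hml : m ≤ l), m < k →
        ∀ x : Y.V ⟨m, hm⟩, pmap Y m hm l hl hml x = 0 := by
      intro m hm hml hmk x
      by_contra hx
      exact hkmin m hmk ⟨hm, hml, x, hx⟩
    have hv0 : v ≠ 0 := fun h0 => hv (by rw [h0, map_zero])
    obtain ⟨T', hT'⟩ := Submodule.exists_isCompl (Submodule.span K {pmap Y k hk l hl hkl v})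
    have hcompl : ∀ p : Fin n, IsCompl (lineSub Y k l hk v p) (compSub Y l hl T' p) :=
      fun p => isCompl_line_comp hkl hv hT' hlow p
    have iso1 : Iso (((⟨lineSub Y k l hk v, fun e => lineSub_stable hkl hmax e⟩ :
          Sub Y).toRep).dsum
        ((⟨compSub Y l hl T', fun e x hx => compSub_stable e x hx⟩ : Sub Y).toRep)) Y :=
      iso_of_isCompl _ _ hcompl
    have iso2 : Iso (Eij K n k l) ((⟨lineSub Y k l hk v,
        fun e => lineSub_stable hkl hmax e⟩ : Sub Y).toRep) :=
      iso_Eij_lineSub hkl v hv hmax _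
    -- dimension drop
    have hfr : Module.finrank K (lineSub Y k l hk v ⟨k, hk⟩)
        + Module.finrank K (compSub Y l hl T' ⟨k, hk⟩) = Module.finrank K (Y.V ⟨k, hk⟩) :=
      Submodule.finrank_add_eq_of_isCompl (hcompl ⟨k, hk⟩)
    have h1 : Module.finrank K (lineSub Y k l hk v ⟨k, hk⟩) = 1 := by
      rw [lineSub_pos (p := (⟨k, hk⟩ : Fin n)) ⟨le_rfl, hkl⟩,
        show pmap Y k hk (⟨k, hk⟩ : Fin n).val (⟨k, hk⟩ : Fin n).isLt le_rfl v = v from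
          pmap_self Y k hk hk le_rfl v]
      exact finrank_span_singleton hv0
    have hdim : totdim ((⟨compSub Y l hl T', fun e x hx => compSub_stable e x hx⟩ :
        Sub Y).toRep) ≤ N := by
      have hstrict : totdim ((⟨compSub Y l hl T', fun e x hx => compSub_stable e x hx⟩ :
          Sub Y).toRep) < totdim Y := by
        refine Finset.sum_lt_sum (fun p _ => Submodule.finrank_le _)
          ⟨⟨k, hk⟩, Finset.mem_univ _, ?_⟩
        show Module.finrank K (compSub Y l hl T' ⟨k, hk⟩) < Module.finrank K (Y.V ⟨k, hk⟩)
        omega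
      omega
    obtain ⟨L', hL', iso3⟩ := ih _ hdim
    refine ⟨(k, l) :: L', ?_, ?_⟩
    · intro pr hpr
      rcases List.mem_cons.1 hpr with h | h
      · rw [h]
        exact ⟨hkl, hl⟩
      · exact hL' pr h
    · rw [intervalSum_cons]
      exact (iso1.symm).trans (Iso.dsum_congr iso2.symm iso3)

end Gabriel2
section Closures

variable {K : Type} [Field K] {n : ℕ}

open QRep

theorem inCat_of_goodRep {a : ℕ → ℕ} (Y : ARep K n) (h : GoodRep a Y) :
    InCat K n (condF n a) Y := by
  obtain ⟨L, hval, f, hf⟩ := gabriel Y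
  refine ⟨L, ?_, f, hf⟩
  intro pr hpr
  have h1 := hval pr hpr
  refine ⟨h1.1, h1.2, ?_⟩
  have hre : Reach (intervalSum K n L) pr.1 pr.2 := reach_intervalSum_mem hpr h1.1 h1.2
  exact h pr.1 pr.2 (reach_of_surj f (fun i => (hf i).2) hre)

theorem quotClosed (a : ℕ → ℕ) : QuotClosedCat K n (condF n a) := by
  intro X Y hX hsurj
  obtain ⟨f, hf⟩ := hsurj
  exact inCat_of_goodRep Y (fun k l hr => goodRep_of_inCat hX k l (reach_of_surj f hf hr))

theorem extClosed {a : ℕ → ℕ} (hbr : IsBracketVecN n a) : ExtClosedCat K n (condF n a) := by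
  intro X Y Z hX hZ hE
  obtain ⟨E⟩ := hE
  exact inCat_of_goodRep Y (goodRep_ext hbr E (goodRep_of_inCat hX) (goodRep_of_inCat hZ))

theorem inCat_single {a : ℕ → ℕ} (i j : ℕ) (h : condF n a (i, j)) :
    InCat K n (condF n a) (Eij K n i j) :=
  ⟨[(i, j)], by simpa using h, by rw [intervalSum_cons]; exact Iso.dsum_zero _⟩

end Closures
section FinalExt

variable {K : Type} [Field K] {n : ℕ}

open QRep

/-- the canonical value-preserving-or-zero map between interval representations -/
noncomputable def resMap (i j i' j' : ℕ) (p : Fin n) :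
    (Eij K n i j).V p →ₗ[K] (Eij K n i' j').V p :=
  (toSub (ESub K n i' j' p)).comp (ESub K n i j p).subtype

theorem resMap_val (i j i' j' : ℕ) (p : Fin n) (x : (Eij K n i j).V p) :
    evalE (resMap i j i' j' p x) = if i' ≤ p.val ∧ p.val ≤ j' then evalE x else 0 := by
  by_cases h : i' ≤ p.val ∧ p.val ≤ j'
  · rw [if_pos h]
    exact toSub_val _ (ESub_eq_top_iff.2 h) _
  · rw [if_neg h]
    show evalE (show (Eij K n i' j').V p from toSub (ESub K n i' j' p) (evalE x)) = 0
    rw [toSub_zero _ (fun ht => h (ESub_eq_top_iff.1 ht)) _]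
    rfl

/-- the canonical extension of `E^{s,m}` by `E^{m+1,e}` with middle term `E^{s,e}` -/
noncomputable def intervalExt (s m e : ℕ) (hsm : s ≤ m) (hme : m < e) (he : e < n) :
    Extension (Eij K n (m+1) e) (Eij K n s e) (Eij K n s m) where
  incl :=
    { φ := fun p => resMap (m+1) e s e p
      comm := by
        intro e'
        ext x
        have he' : (e' : ℕ) < n - 1 := e'.isLt
        have hm1 : e'.val + 1 < n := by omega
        apply evalE_inj
        have h1 : evalE ((Eij K n s e).f e' (resMap (m+1) e s e (ASrc n e') x))
            = if s ≤ e'.val + 1 ∧ e'.val + 1 ≤ e then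
                evalE (resMap (m+1) e s e (ASrc n e') x) else 0 :=
          Eij_step_val s e e'.val hm1 _
        have h2 : evalE ((Eij K n (m+1) e).f e' x)
            = if m+1 ≤ e'.val + 1 ∧ e'.val + 1 ≤ e then evalE x else 0 :=
          Eij_step_val (m+1) e e'.val hm1 _
        show evalE ((Eij K n s e).f e' (resMap (m+1) e s e (ASrc n e') x))
          = evalE (resMap (m+1) e s e (ATgt n e') ((Eij K n (m+1) e).f e' x))
        rw [h1, resMap_val, resMap_val, h2]
        show (if s ≤ e'.val + 1 ∧ e'.val + 1 ≤ e then
            (if s ≤ e'.val ∧ e'.val ≤ e then evalE x else 0) else 0)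
          = if s ≤ e'.val + 1 ∧ e'.val + 1 ≤ e then
              (if m+1 ≤ e'.val + 1 ∧ e'.val + 1 ≤ e then evalE x else 0) else 0
        by_cases hx : (m+1) ≤ e'.val ∧ e'.val ≤ e
        · split_ifs <;> first | rfl | omega
        · rw [ESub_elem_zero (p := ASrc n e') (fun hc => hx ⟨hc.1, hc.2⟩) x, evalE_zero]
          split_ifs <;> rfl }
  proj :=
    { φ := fun p => resMap s e s m p
      comm := by
        intro e'
        ext x
        have he' : (e' : ℕ) < n - 1 := e'.isLt
        have hm1 : e'.val + 1 < n := by omega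
        apply evalE_inj
        have h1 : evalE ((Eij K n s m).f e' (resMap s e s m (ASrc n e') x))
            = if s ≤ e'.val + 1 ∧ e'.val + 1 ≤ m then
                evalE (resMap s e s m (ASrc n e') x) else 0 :=
          Eij_step_val s m e'.val hm1 _
        have h2 : evalE ((Eij K n s e).f e' x)
            = if s ≤ e'.val + 1 ∧ e'.val + 1 ≤ e then evalE x else 0 :=
          Eij_step_val s e e'.val hm1 _
        show evalE ((Eij K n s m).f e' (resMap s e s m (ASrc n e') x))
          = evalE (resMap s e s m (ATgt n e') ((Eij K n s e).f e' x))
        rw [h1, resMap_val, resMap_val, h2]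
        show (if s ≤ e'.val + 1 ∧ e'.val + 1 ≤ m then
            (if s ≤ e'.val ∧ e'.val ≤ m then evalE x else 0) else 0)
          = if s ≤ e'.val + 1 ∧ e'.val + 1 ≤ m then
              (if s ≤ e'.val + 1 ∧ e'.val + 1 ≤ e then evalE x else 0) else 0
        by_cases hx : s ≤ e'.val ∧ e'.val ≤ e
        · split_ifs <;> first | rfl | omega
        · rw [ESub_elem_zero (p := ASrc n e') (fun hc => hx ⟨hc.1, hc.2⟩) x, evalE_zero]
          split_ifs <;> rfl }
  inj := by
    intro p x y hxy
    by_cases h : m+1 ≤ p.val ∧ p.val ≤ e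
    · apply evalE_inj
      have hx := resMap_val (m+1) e s e p x
      have hy := resMap_val (m+1) e s e p y
      rw [if_pos ⟨by omega, h.2⟩] at hx hy
      rw [← hx, ← hy, hxy]
    · rw [ESub_elem_zero h x, ESub_elem_zero h y]
  surj := by
    intro p z
    by_cases h : s ≤ p.val ∧ p.val ≤ m
    · refine ⟨⟨evalE z, mem_ESub _ ⟨h.1, by omega⟩⟩, ?_⟩
      apply evalE_inj
      exact (resMap_val s e s m p _).trans (if_pos h)
    · refine ⟨0, ?_⟩
      rw [map_zero, ESub_elem_zero h z]
  exact := by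
    intro p
    ext x
    simp only [LinearMap.mem_ker, LinearMap.mem_range]
    constructor
    · intro hx
      by_cases h : m+1 ≤ p.val ∧ p.val ≤ e
      · refine ⟨⟨evalE x, mem_ESub _ h⟩, ?_⟩
        apply evalE_inj
        exact (resMap_val (m+1) e s e p _).trans (if_pos (show s ≤ p.val ∧ p.val ≤ e from ⟨by omega, h.2⟩))
      · refine ⟨0, ?_⟩
        rw [map_zero]
        by_cases h2 : s ≤ p.val ∧ p.val ≤ e
        · -- then p ≤ m, so the value of x is detected by the projection
          have hpm : p.val ≤ m := by
            rcases Nat.lt_or_ge p.val (m+1) with hlt | hge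
            · omega
            · exact absurd ⟨hge, h2.2⟩ h
          have hval := resMap_val s e s m p x
          rw [hx, if_pos ⟨h2.1, hpm⟩] at hval
          refine (evalE_inj ?_).symm
          rw [evalE_zero, ← hval, evalE_zero]
        · exact (ESub_elem_zero h2 x).symm
    · rintro ⟨w, hw⟩
      apply evalE_inj
      rw [← hw]
      have h1 := resMap_val s e s m p (resMap (m+1) e s e p w)
      rw [h1, evalE_zero]
      by_cases h : s ≤ p.val ∧ p.val ≤ m
      · rw [if_pos h, resMap_val, if_pos ⟨h.1, by omega⟩,
          ESub_elem_zero (p := p) (fun hc => by omega) w, evalE_zero]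
      · rw [if_neg h]

end FinalExt
/-- for `a ∈ M`, the subcategory `C_a` is a torsion class (closed under
quotients and extensions) if and only if `a` is a bracket vector. -/
theorem stmt17 (K : Type) [Field K] (n : ℕ) (a : ℕ → ℕ) (hM : ∀ i < n, a i ≤ n - i) :
    (QuotClosedCat K n (condF n a) ∧ ExtClosedCat K n (condF n a)) ↔ IsBracketVecN n a := by
  constructor
  · rintro ⟨hquot, hext⟩
    intro i hi j hj1 hj2 hij
    by_cases ha : a (i + j) = 0
    · omega
    · have hai := hM i hi
      have haij := hM (i + j) hij
      set e := i + j + a (i + j) - 1 with hedef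
      have he : e < n := by omega
      have hEx : Nonempty (QRep.Extension (Eij K n (i+j) e) (Eij K n i e)
          (Eij K n i (i+j-1))) := by
        have hE := intervalExt (K := K) i (i+j-1) e (by omega) (by omega) he
        rw [show i + j - 1 + 1 = i + j from by omega] at hE
        exact ⟨hE⟩
      have hX : InCat K n (condF n a) (Eij K n (i+j) e) :=
        inCat_single _ _ ⟨(by omega : i + j ≤ e), he, (by omega : e < i + j + a (i + j))⟩
      have hZ : InCat K n (condF n a) (Eij K n i (i+j-1)) :=
        inCat_single _ _ ⟨(by omega : i ≤ i + j - 1), (by omega : i + j - 1 < n), (by omega : i + j - 1 < i + a i)⟩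
      have hY := hext _ _ _ hX hZ hEx
      have hgood := goodRep_of_inCat hY
      have hbound := hgood i e (reach_Eij_self i e (by omega) he)
      omega
  · intro hbr
    exact ⟨quotClosed a, extClosed hbr⟩
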